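/- Let k be a field of prime characteristic p, S = k[x_0,…,x_n], and f ∈ S homogeneous of degree d > 0 with R = S/fS and m the image of (x_0,…,x_n). Set m(q) = ⌊((n+1)(q−1)+(d−1))/2⌋ and assume R attains the minimal Hilbert–Kunz function, i.e. max{ r : m^r ⊄ m^{[q]} } = m(q) for every q = p^e. Let Θ = S/(x_0^q,…,x_n^q) and θ = S/(fS + (x_0^q,…,x_n^q)), with degree-i graded pieces Θ_i and θ_i. Then for every q = p^e and every i ≤ m(q), the sequence 0 → Θ_{i−d} → Θ_i → θ_i → 0 is exact, where the first map is multiplication by f; in particular multiplication by f is injective from Θ_{i−d} to Θ_i for all i ≤ m(q). -/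

import Mathlib

set_option synthInstance.maxHeartbeats 1000000
set_option maxHeartbeats 1000000

open MvPolynomial

/-- The `q`-th Frobenius power of an ideal: the ideal generated by the `q`-th powers of
its elements. -/
noncomputable def frobPow {R : Type*} [CommRing R] (I : Ideal R) (q : ℕ) : Ideal R :=
  Ideal.span ((fun a => a ^ q) '' (I : Set R))

/-- `nu m J = max { r ∈ ℕ : m^r ⊄ J }`, the top socle degree of `R/J`. -/
noncomputable def nu {R : Type*} [CommRing R] (m J : Ideal R) : ℕ :=
  sSup {r : ℕ | ¬ m ^ r ≤ J}

/-- The Buchweitz–Chen bound `m(q) = ⌊((n+1)(q−1)+(d−1))/2⌋`. -/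
def mBC (n d q : ℕ) : ℕ := ((n + 1) * (q - 1) + (d - 1)) / 2

namespace HKaux

lemma degree_add {σ : Type*} (u v : σ →₀ ℕ) :
    (u + v).degree = u.degree + v.degree := by
  simp [Finsupp.degree_eq_weight_one, map_add]

lemma degree_eq_sum_univ {σ : Type*} [Fintype σ] (a : σ →₀ ℕ) :
    a.degree = ∑ l, a l :=
  Finset.sum_subset (Finset.subset_univ _)
    (fun _ _ hx => Finsupp.notMem_support_iff.1 hx)

lemma hc_mul {σ : Type*} [DecidableEq σ] {k : Type*} [CommRing k] {f : MvPolynomial σ k} {d : ℕ}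
    (hf : f.IsHomogeneous d) (c : MvPolynomial σ k) {i : ℕ} (hdi : d ≤ i) :
    homogeneousComponent i (f * c) = f * homogeneousComponent (i - d) c := by
  ext m
  rw [coeff_homogeneousComponent, coeff_mul, coeff_mul]
  split_ifs with h
  · refine Finset.sum_congr rfl fun x hx => ?_
    rw [Finset.HasAntidiagonal.mem_antidiagonal] at hx
    rw [coeff_homogeneousComponent]
    by_cases hu : coeff x.1 f = 0
    · simp [hu]
    · have hdu : x.1.degree = d := by
        rw [Finsupp.degree_eq_weight_one]; exact hf hu
      have hx2 : x.2.degree = i - d := by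
        have h2 : x.1.degree + x.2.degree = i := by rw [← degree_add, hx, h]
        omega
      rw [if_pos hx2]
  · refine (Finset.sum_eq_zero fun x hx => ?_).symm
    rw [Finset.HasAntidiagonal.mem_antidiagonal] at hx
    rw [coeff_homogeneousComponent]
    by_cases hu : coeff x.1 f = 0
    · simp [hu]
    · have hdu : x.1.degree = d := by
        rw [Finsupp.degree_eq_weight_one]; exact hf hu
      split_ifs with h2
      · exact absurd (by rw [← hx, degree_add, hdu, h2]; omega) h
      · exact mul_zero _

lemma hc_mul_lt {σ : Type*} [DecidableEq σ] {k : Type*} [CommRing k] {f : MvPolynomial σ k} {d : ℕ}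
    (hf : f.IsHomogeneous d) (c : MvPolynomial σ k) {i : ℕ} (hid : i < d) :
    homogeneousComponent i (f * c) = 0 := by
  ext m
  rw [coeff_homogeneousComponent]
  simp only [MvPolynomial.coeff_zero]
  split_ifs with h
  · rw [coeff_mul]
    refine Finset.sum_eq_zero fun x hx => ?_
    rw [Finset.HasAntidiagonal.mem_antidiagonal] at hx
    by_cases hu : coeff x.1 f = 0
    · simp [hu]
    · have hdu : x.1.degree = d := by
        rw [Finsupp.degree_eq_weight_one]; exact hf hu
      exfalso
      have h2 : x.1.degree + x.2.degree = i := by rw [← degree_add, hx, h]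
      omega
  · rfl

lemma hc_mem_span_X_pow {n q : ℕ} {k : Type*} [CommRing k] {b : MvPolynomial (Fin (n+1)) k}
    (hb : b ∈ Ideal.span (Set.range fun j : Fin (n + 1) =>
      (X j : MvPolynomial (Fin (n + 1)) k) ^ q)) (i : ℕ) :
    homogeneousComponent i b ∈ Ideal.span (Set.range fun j : Fin (n + 1) =>
      (X j : MvPolynomial (Fin (n + 1)) k) ^ q) := by
  rw [Ideal.mem_span_range_iff_exists_fun] at hb
  obtain ⟨c, hc⟩ := hb
  rw [← hc, map_sum]
  refine Ideal.sum_mem _ fun l _ => ?_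
  have hX : (X l ^ q : MvPolynomial (Fin (n + 1)) k).IsHomogeneous q :=
    isHomogeneous_X_pow _ _
  rw [mul_comm (c l)]
  rcases le_or_gt q i with h | h
  · rw [hc_mul hX _ h]
    exact Ideal.mul_mem_right _ _ (Ideal.subset_span ⟨l, rfl⟩)
  · rw [hc_mul_lt hX _ h]
    exact Ideal.zero_mem _

lemma mem_span_X_pow_of_forall {n q : ℕ} {k : Type*} [CommRing k]
    {w : MvPolynomial (Fin (n+1)) k}
    (hw : ∀ a ∈ w.support, ∃ l, q ≤ a l) :
    w ∈ Ideal.span (Set.range fun j : Fin (n + 1) =>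
      (X j : MvPolynomial (Fin (n + 1)) k) ^ q) := by
  rw [← support_sum_monomial_coeff w]
  refine Ideal.sum_mem _ fun a ha => ?_
  obtain ⟨l, hl⟩ := hw a ha
  have heq : monomial a (coeff a w)
      = X l ^ q * monomial (a - Finsupp.single l q) (coeff a w) := by
    rw [X_pow_eq_monomial, monomial_mul, one_mul,
      add_tsub_cancel_of_le (Finsupp.single_le_iff.2 hl)]
  rw [heq]
  exact Ideal.mul_mem_right _ _ (Ideal.subset_span ⟨l, rfl⟩)

lemma coeff_eq_zero_of_mem_span_X_pow {n q : ℕ} {k : Type*} [CommRing k]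
    {Q : Fin (n+1) →₀ ℕ} (hQ : ∀ l, Q l < q) {w : MvPolynomial (Fin (n+1)) k}
    (hw : w ∈ Ideal.span (Set.range fun j : Fin (n + 1) =>
      (X j : MvPolynomial (Fin (n + 1)) k) ^ q)) :
    coeff Q w = 0 := by
  have key : ∀ r : MvPolynomial (Fin (n+1)) k, coeff Q (r * w) = 0 := by
    refine Submodule.span_induction
      (p := fun w _ => ∀ r : MvPolynomial (Fin (n+1)) k, coeff Q (r * w) = 0)
      ?_ ?_ ?_ ?_ hw
    · rintro x ⟨l, rfl⟩ r
      change coeff Q (r * (X l ^ q)) = 0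
      rw [X_pow_eq_monomial, coeff_mul_monomial']
      rw [if_neg fun hle => absurd (Finsupp.single_le_iff.1 hle) (not_le.2 (hQ l))]
    · intro r; rw [mul_zero, coeff_zero]
    · intro x y _ _ hx hy r
      rw [mul_add, coeff_add, hx, hy, add_zero]
    · intro c x _ hx r
      rw [smul_eq_mul, ← mul_assoc, hx]
  simpa using key 1

lemma support_degree_of_mem_pow {n : ℕ} {k : Type*} [CommRing k] :
    ∀ (r : ℕ) (w : MvPolynomial (Fin (n+1)) k),
      w ∈ (Ideal.span (Set.range (X : Fin (n + 1) → MvPolynomial (Fin (n + 1)) k))) ^ r →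
      ∀ a ∈ w.support, r ≤ a.degree := by
  intro r
  induction r with
  | zero => intro w _ a _; exact Nat.zero_le _
  | succ r ih =>
    intro w hw
    rw [pow_succ] at hw
    refine Submodule.mul_induction_on hw ?_ ?_
    · intro x hx y hy a ha
      have hsub := Finset.mem_add.1 (MvPolynomial.support_mul x y ha)
      obtain ⟨u, hu, v, hv, rfl⟩ := hsub
      have h1 := ih x hx u hu
      have h2 : 1 ≤ v.degree := by
        rw [← Set.image_univ] at hy
        obtain ⟨i, -, hi⟩ := (mem_ideal_span_X_image).1 hy v hv
        have := Finsupp.le_degree i v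
        omega
      rw [degree_add]; omega
    · intro x y hx hy a ha
      rcases Finset.mem_union.1 (MvPolynomial.support_add ha) with h | h
      exacts [hx a h, hy a h]

lemma monomial_mem_pow {n : ℕ} {k : Type*} [CommRing k] (b : Fin (n+1) →₀ ℕ) :
    (monomial b (1 : k)) ∈
      (Ideal.span (Set.range (X : Fin (n + 1) → MvPolynomial (Fin (n + 1)) k))) ^ b.degree := by
  rw [← prod_X_pow_eq_monomial]
  have key : ∀ t : Finset (Fin (n+1)),
      (∏ x ∈ t, (X x : MvPolynomial (Fin (n + 1)) k) ^ b x) ∈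
        (Ideal.span (Set.range (X : Fin (n + 1) → MvPolynomial (Fin (n + 1)) k)))
          ^ (∑ x ∈ t, b x) := by
    intro t
    induction t using Finset.cons_induction with
    | empty =>
      rw [Finset.prod_empty, Finset.sum_empty, pow_zero, Ideal.one_eq_top]
      exact Submodule.mem_top
    | cons a s ha ih =>
      rw [Finset.prod_cons, Finset.sum_cons, pow_add]
      have hXa : (X a : MvPolynomial (Fin (n + 1)) k) ∈
          Ideal.span (Set.range (X : Fin (n + 1) → MvPolynomial (Fin (n + 1)) k)) :=
        Ideal.subset_span ⟨a, rfl⟩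
      exact Ideal.mul_mem_mul (Ideal.pow_mem_pow hXa _) ih
  exact key b.support

end HKaux

open HKaux

/-- **For a hypersurface attaining the minimal Hilbert–Kunz function, the sequences
`0 → Θ_{i−d} → Θ_i → θ_i → 0` are exact for `i ≤ m(q)`.**  Here `Θ = S/(x_0^q,…,x_n^q)`,
`θ = S/(fS + (x_0^q,…,x_n^q))`, the first map is multiplication by `f` and the second is
the natural projection (with `Θ_{i−d} = 0` for `i < d`).  Exactness is expressed
componentwise on homogeneous polynomials:
* (injectivity of `·f : Θ_{i−d} → Θ_i`) if `g` is homogeneous of degree `i−d` and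
  `f·g ∈ (x^q)`, then `g ∈ (x^q)`;
* (exactness at `Θ_i`, case `d ≤ i`) every homogeneous `g` of degree `i` lying in
  `fS + (x^q)` is congruent mod `(x^q)` to `f·h` with `h` homogeneous of degree `i−d`;
* (exactness at `Θ_i`, case `i < d`, where `Θ_{i−d} = 0`) every homogeneous `g` of degree
  `i` lying in `fS + (x^q)` already lies in `(x^q)`.
(The surjectivity of `Θ_i → θ_i` holds by definition of `θ` as a quotient of `Θ`.) -/
theorem exact_graded_pieces_of_minimal_hilbertKunz
    (n d : ℕ) (hd : 0 < d)
    (p : ℕ) (hp : p.Prime) (k : Type*) [Field k] [CharP k p]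
    (f : MvPolynomial (Fin (n + 1)) k) (hf : f.IsHomogeneous d)
    -- `R = S/fS` attains the minimal Hilbert–Kunz function
    (hmin : ∀ e : ℕ,
      nu ((Ideal.span (Set.range (X : Fin (n + 1) → MvPolynomial (Fin (n + 1)) k))).map
            (Ideal.Quotient.mk (Ideal.span {f})))
          (frobPow
            ((Ideal.span (Set.range (X : Fin (n + 1) → MvPolynomial (Fin (n + 1)) k))).map
              (Ideal.Quotient.mk (Ideal.span {f})))
            (p ^ e))
        = mBC n d (p ^ e)) :
    ∀ e : ℕ, ∀ i : ℕ, i ≤ mBC n d (p ^ e) →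
      -- injectivity of multiplication by `f` from `Θ_{i−d}` to `Θ_i` (for all `i ≤ m(q)`)
      ((d ≤ i → ∀ g : MvPolynomial (Fin (n + 1)) k, g.IsHomogeneous (i - d) →
          f * g ∈ Ideal.span (Set.range fun j : Fin (n + 1) =>
            (X j : MvPolynomial (Fin (n + 1)) k) ^ (p ^ e)) →
          g ∈ Ideal.span (Set.range fun j : Fin (n + 1) =>
            (X j : MvPolynomial (Fin (n + 1)) k) ^ (p ^ e))) ∧
      -- exactness at `Θ_i` when `d ≤ i`
      (d ≤ i → ∀ g : MvPolynomial (Fin (n + 1)) k, g.IsHomogeneous i →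
          g ∈ Ideal.span {f} ⊔ Ideal.span (Set.range fun j : Fin (n + 1) =>
            (X j : MvPolynomial (Fin (n + 1)) k) ^ (p ^ e)) →
          ∃ h : MvPolynomial (Fin (n + 1)) k, h.IsHomogeneous (i - d) ∧
            g - f * h ∈ Ideal.span (Set.range fun j : Fin (n + 1) =>
              (X j : MvPolynomial (Fin (n + 1)) k) ^ (p ^ e))) ∧
      -- exactness at `Θ_i` when `i < d` (then `Θ_{i−d} = 0`)
      (i < d → ∀ g : MvPolynomial (Fin (n + 1)) k, g.IsHomogeneous i →
          g ∈ Ideal.span {f} ⊔ Ideal.span (Set.range fun j : Fin (n + 1) =>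
            (X j : MvPolynomial (Fin (n + 1)) k) ^ (p ^ e)) →
          g ∈ Ideal.span (Set.range fun j : Fin (n + 1) =>
            (X j : MvPolynomial (Fin (n + 1)) k) ^ (p ^ e)))) := by

  intro e i hiM
  haveI : Fact p.Prime := ⟨hp⟩
  set q := p ^ e with hq'
  have hq : 0 < q := pow_pos hp.pos e
  set J := Ideal.span (Set.range fun j : Fin (n + 1) =>
    (X j : MvPolynomial (Fin (n + 1)) k) ^ q) with hJ
  set M := mBC n d q with hM
  refine ⟨?_, ?_, ?_⟩
  · -- injectivity of multiplication by f
    intro hdi g hg hfg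
    by_contra hgJ
    have hex : ¬ ∀ a ∈ g.support, ∃ l, q ≤ a l := fun h => hgJ (mem_span_X_pow_of_forall h)
    push_neg at hex
    obtain ⟨a, haS, ha⟩ := hex
    have hane : coeff a g ≠ 0 := mem_support_iff.1 haS
    have hadeg : a.degree = i - d := by
      rw [Finsupp.degree_eq_weight_one]; exact hg hane
    set c : Fin (n + 1) →₀ ℕ := Finsupp.equivFunOnFinite.symm (fun l => q - 1 - a l) with hc
    have hcl : ∀ l, c l = q - 1 - a l := fun l => rfl
    have hQl : ∀ l, (c + a) l < q := by
      intro l; rw [Finsupp.add_apply, hcl]; have := ha l; omega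
    have hcoeff : coeff (c + a) (g * monomial c (1 : k)) = coeff a g := by
      rw [coeff_mul_monomial', if_pos (self_le_add_right c a), add_tsub_cancel_left, mul_one]
    -- the monomial `u = monomial c 1` is not in `(f) ⊔ J`
    have huNot : monomial c (1 : k) ∉ Ideal.span {f} ⊔ J := by
      intro hu'
      rw [Submodule.mem_sup] at hu'
      obtain ⟨v, hv, b, hb, hvb⟩ := hu'
      obtain ⟨c', rfl⟩ := Ideal.mem_span_singleton'.1 hv
      have hgu : g * monomial c (1 : k) ∈ J := by
        rw [← hvb, mul_add]
        refine Ideal.add_mem _ ?_ (Ideal.mul_mem_left _ _ hb)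
        have hrw : g * (c' * f) = c' * (f * g) := by ring
        rw [hrw]
        exact Ideal.mul_mem_left _ _ hfg
      exact hane (by rw [← hcoeff]; exact coeff_eq_zero_of_mem_span_X_pow hQl hgu)
    -- but `u` has degree `≥ M + 1`
    have hudeg : M + 1 ≤ c.degree := by
      have h1 : c.degree = ∑ l, c l := degree_eq_sum_univ c
      have h2 : a.degree = ∑ l, a l := degree_eq_sum_univ a
      have h3 : (∑ l, c l) + (∑ l, a l) = (n + 1) * (q - 1) := by
        rw [← Finset.sum_add_distrib]
        rw [Finset.sum_congr rfl (fun l _ => show c l + a l = q - 1 by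
          rw [hcl]; have := ha l; omega)]
        rw [Finset.sum_const, Finset.card_univ, Fintype.card_fin, smul_eq_mul]
      have hM2 : M = ((n + 1) * (q - 1) + (d - 1)) / 2 := rfl
      omega
    have humem : monomial c (1 : k) ∈
        (Ideal.span (Set.range (X : Fin (n + 1) → MvPolynomial (Fin (n + 1)) k))) ^ (M + 1) :=
      Ideal.pow_le_pow_right hudeg (monomial_mem_pow c)
    -- `m^(M+1) ≤ (f) ⊔ J` from minimality of the Hilbert–Kunz function
    have lemA : (Ideal.span (Set.range (X : Fin (n + 1) → MvPolynomial (Fin (n + 1)) k)))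
        ^ (M + 1) ≤ Ideal.span {f} ⊔ J := by
      set mS := Ideal.span (Set.range (X : Fin (n + 1) → MvPolynomial (Fin (n + 1)) k))
        with hmS
      set mkq := Ideal.Quotient.mk (Ideal.span {f}) with hmk
      set mR := mS.map mkq with hmR
      have h8 : ∀ b ∈ mS, b ^ q ∈ J := by
        intro b hb
        refine Submodule.span_induction
          (p := fun b _ => b ^ q ∈ J) ?_ ?_ ?_ ?_ hb
        · rintro x ⟨l, rfl⟩
          exact Ideal.subset_span ⟨l, rfl⟩
        · show (0 : MvPolynomial (Fin (n + 1)) k) ^ q ∈ J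
          rw [zero_pow hq.ne']; exact Ideal.zero_mem _
        · intro x y _ _ hx hy
          rw [hq', add_pow_char_pow]
          exact Ideal.add_mem _ hx hy
        · intro r x _ hx
          rw [smul_eq_mul, mul_pow]
          exact Ideal.mul_mem_left _ _ hx
      have frob_le : frobPow mR q ≤ J.map mkq := by
        rw [frobPow]
        refine Ideal.span_le.2 ?_
        rintro _ ⟨x, hx, rfl⟩
        obtain ⟨b, hbm, rfl⟩ :=
          (Ideal.mem_map_iff_of_surjective mkq Ideal.Quotient.mk_surjective).1 hx
        show (mkq b) ^ q ∈ Ideal.map mkq J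
        rw [← map_pow]
        exact Ideal.mem_map_of_mem mkq (h8 b hbm)
      have mapJ_le : J.map mkq ≤ frobPow mR q := by
        rw [hJ, Ideal.map_span]
        refine Ideal.span_le.2 ?_
        rintro _ ⟨_, ⟨l, rfl⟩, rfl⟩
        rw [map_pow]
        exact Ideal.subset_span
          ⟨mkq (X l), Ideal.mem_map_of_mem mkq (Ideal.subset_span ⟨l, rfl⟩), rfl⟩
      have powS_le : mS ^ ((n + 1) * (q - 1) + 1) ≤ J := by
        intro w hw
        refine mem_span_X_pow_of_forall (fun a' ha' => ?_)
        have hdeg := support_degree_of_mem_pow _ w hw a' ha'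
        by_contra hno
        push_neg at hno
        have hds : a'.degree = ∑ l, a' l := degree_eq_sum_univ a'
        have hb2 : ∑ l, a' l ≤ ∑ _l : Fin (n + 1), (q - 1) :=
          Finset.sum_le_sum (fun l _ => by have := hno l; omega)
        rw [Finset.sum_const, Finset.card_univ, Fintype.card_fin, smul_eq_mul] at hb2
        omega
      have hbdd : BddAbove {r : ℕ | ¬ mR ^ r ≤ frobPow mR q} := by
        refine ⟨(n + 1) * (q - 1) + 1, fun r hr => ?_⟩
        by_contra hlt
        push_neg at hlt
        apply hr
        calc mR ^ r ≤ mR ^ ((n + 1) * (q - 1) + 1) := Ideal.pow_le_pow_right (by omega)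
          _ = Ideal.map mkq (mS ^ ((n + 1) * (q - 1) + 1)) := (Ideal.map_pow _ _ _).symm
          _ ≤ Ideal.map mkq J := Ideal.map_mono powS_le
          _ ≤ frobPow mR q := mapJ_le
      have hMval := hmin e
      unfold nu at hMval
      rw [← hq'] at hMval
      have hM1 : mR ^ (M + 1) ≤ frobPow mR q := by
        by_contra hcon
        have hmem' : M + 1 ∈ {r : ℕ | ¬ mR ^ r ≤ frobPow mR q} := hcon
        have hle := le_csSup hbdd hmem'
        rw [hMval] at hle
        rw [← hM] at hle
        omega
      intro w hw
      have hwJ : mkq w ∈ Ideal.map mkq J := by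
        apply frob_le
        apply hM1
        rw [hmR, ← Ideal.map_pow]
        exact Ideal.mem_map_of_mem mkq hw
      obtain ⟨b, hbJ, hbw⟩ :=
        (Ideal.mem_map_iff_of_surjective mkq Ideal.Quotient.mk_surjective).1 hwJ
      have hwb : w - b ∈ Ideal.span {f} := by
        rw [← Ideal.Quotient.eq_zero_iff_mem, map_sub, hbw, sub_self]
      have hsplit : w = (w - b) + b := by ring
      rw [hsplit]
      exact Submodule.add_mem _ (Submodule.mem_sup_left hwb) (Submodule.mem_sup_right hbJ)
    exact huNot (lemA humem)
  · -- exactness at Θ_i, case d ≤ i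
    intro hdi g hg hmem
    rw [Submodule.mem_sup] at hmem
    obtain ⟨v, hv, b, hb, hvb⟩ := hmem
    obtain ⟨c, rfl⟩ := Ideal.mem_span_singleton'.1 hv
    refine ⟨homogeneousComponent (i - d) c, homogeneousComponent_isHomogeneous _ _, ?_⟩
    have e1 : homogeneousComponent i g = g := by
      rw [homogeneousComponent_of_mem ((mem_homogeneousSubmodule _ _).2 hg), if_pos rfl]
    have e2 : g - f * homogeneousComponent (i - d) c = homogeneousComponent i b := by
      rw [← hc_mul hf c hdi, ← e1, ← hvb, map_add, mul_comm c f]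
      ring
    rw [e2]
    exact hc_mem_span_X_pow hb i
  · -- exactness at Θ_i, case i < d
    intro hid g hg hmem
    rw [Submodule.mem_sup] at hmem
    obtain ⟨v, hv, b, hb, hvb⟩ := hmem
    obtain ⟨c, rfl⟩ := Ideal.mem_span_singleton'.1 hv
    have e1 : homogeneousComponent i g = g := by
      rw [homogeneousComponent_of_mem ((mem_homogeneousSubmodule _ _).2 hg), if_pos rfl]
    have e2 : g = homogeneousComponent i b := by
      rw [← e1, ← hvb, map_add, mul_comm c f, hc_mul_lt hf c hid, zero_add]
    rw [e2]
    exact hc_mem_span_X_pow hb i
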